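/- Let Φ be the linear flow on ℝ^{2d+1} generated by the nilpotent Jordan block J_{2d+1} (d ∈ ℕ). Then C₀*(Φ,X) = C₀(Φ,X) = span{e_1,…,e_d} and C*(Φ,X) = C(Φ,X) = span{e_1,…,e_{d+1}}. -/

import Mathlib

open Filter Topology

/-- The linear flow on `ℝ^m` generated by the nilpotent single Jordan block `J_m`. -/
noncomputable def jordanFlow (m : ℕ) (t : ℝ) (x : Fin m → ℝ) : Fin m → ℝ :=
  (NormedSpace.exp
    (t • (Matrix.of fun i j : Fin m => if (i : ℕ) + 1 = (j : ℕ) then (1 : ℝ) else 0))).mulVec x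

/-- The core `C(Φ, ℝ^m)` of the Jordan flow. -/
def jordanCoreC (m : ℕ) : Set (Fin m → ℝ) :=
  {x | ∃ (tp tm : ℕ → ℝ) (up um : ℕ → Fin m → ℝ),
    Tendsto tp atTop atTop ∧ Tendsto tm atTop atBot ∧
    Tendsto up atTop (𝓝 x) ∧ Tendsto um atTop (𝓝 x) ∧
    (∃ M : ℝ, ∀ n, ‖jordanFlow m (tp n) (up n)‖ ≤ M) ∧
    (∃ M : ℝ, ∀ n, ‖jordanFlow m (tm n) (um n)‖ ≤ M)}

/-- The `(0,0)`-core `C₀(Φ, ℝ^m)` of the Jordan flow. -/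
def jordanCoreC0 (m : ℕ) : Set (Fin m → ℝ) :=
  {x | ∃ (tp tm : ℕ → ℝ) (up um : ℕ → Fin m → ℝ),
    Tendsto tp atTop atTop ∧ Tendsto tm atTop atBot ∧
    Tendsto up atTop (𝓝 x) ∧ Tendsto um atTop (𝓝 x) ∧
    Tendsto (fun n => jordanFlow m (tp n) (up n)) atTop (𝓝 0) ∧
    Tendsto (fun n => jordanFlow m (tm n) (um n)) atTop (𝓝 0)}

/-- The uniform core `C*(Φ, ℝ^m)` of the Jordan flow. -/
def jordanCoreCstar (m : ℕ) : Set (Fin m → ℝ) :=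
  {x | ∀ t : ℕ → ℝ, Tendsto (fun n => |t n|) atTop atTop →
    ∃ u : ℕ → Fin m → ℝ, Tendsto u atTop (𝓝 x) ∧
      ∃ M : ℝ, ∀ n, ‖jordanFlow m (t n) (u n)‖ ≤ M}

/-- The uniform `(0,0)`-core `C₀*(Φ, ℝ^m)` of the Jordan flow. -/
def jordanCoreC0star (m : ℕ) : Set (Fin m → ℝ) :=
  {x | ∀ t : ℕ → ℝ, Tendsto (fun n => |t n|) atTop atTop →
    ∃ u : ℕ → Fin m → ℝ, Tendsto u atTop (𝓝 x) ∧
      Tendsto (fun n => jordanFlow m (t n) (u n)) atTop (𝓝 0)}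



namespace Stmt13aux
open Filter Topology Polynomial Finset
open scoped Nat




/-- Key alternating binomial identity. -/
lemma zhu : ∀ (l D a : ℕ), a ≤ D → l ≤ D →
    ∑ k ∈ range (l+1), (-1:ℤ)^k * (l.choose k) * ((D-k).choose (D-a)) = ((D-l).choose a) := by
  intro l
  induction l with
  | zero =>
    intro D a ha _
    simp [Nat.choose_symm ha]
  | succ l ih =>
    intro D a ha hl
    have hD1 : 1 ≤ D := le_trans (Nat.succ_le_succ (Nat.zero_le l)) hl
    rcases Nat.eq_zero_or_pos a with rfl | hapos
    · -- a = 0 : only k = 0 contributes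
      rw [Finset.sum_eq_single 0]
      · simp
      · intro k hk hk0
        have hkpos : 0 < k := Nat.pos_of_ne_zero hk0
        have hk2 : k ≤ l + 1 := by simp [Finset.mem_range] at hk; omega
        have : (D - k).choose (D - 0) = 0 := by
          apply Nat.choose_eq_zero_of_lt
          omega
        have h0 : (((D - k).choose (D - 0) : ℕ) : ℤ) = 0 := by exact_mod_cast this
        rw [h0, mul_zero]
      · intro h; simp at h
    · -- main case
      set f : ℕ → ℤ := fun k => (-1:ℤ)^k * (l.choose k) * ((D-k).choose (D-a)) with hf
      set g : ℕ → ℤ := fun k => (-1:ℤ)^k * ((l+1).choose k) * ((D-k).choose (D-a)) with hg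
      have hsplit : ∑ k ∈ range (l+1+1), g k = ∑ j ∈ range (l+1), g (j+1) + g 0 :=
        Finset.sum_range_succ' g (l+1)
      have hgj : ∀ j, g (j+1) = f (j+1) + (-1:ℤ)^(j+1) * (l.choose j) * ((D-(j+1)).choose (D-a)) := by
        intro j
        simp only [hg, hf, Nat.choose_succ_succ' l j]
        push_cast
        ring
      have hsum1 : ∑ j ∈ range (l+1), g (j+1)
          = (∑ j ∈ range (l+1), f (j+1))
            + (∑ j ∈ range (l+1), (-1:ℤ)^(j+1) * (l.choose j) * ((D-(j+1)).choose (D-a))) := by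
        rw [← Finset.sum_add_distrib]
        exact Finset.sum_congr rfl fun j _ => hgj j
      have hg0 : g 0 = f 0 := by simp [hg, hf]
      have hfirst : (∑ j ∈ range (l+1), f (j+1)) + f 0 = ((D-l).choose a) := by
        have h1 : (∑ j ∈ range (l+1), f (j+1)) + f 0 = ∑ k ∈ range (l+1+1), f k :=
          (Finset.sum_range_succ' f (l+1)).symm
        have h2 : ∑ k ∈ range (l+1+1), f k = ∑ k ∈ range (l+1), f k + f (l+1) :=
          Finset.sum_range_succ f (l+1)
        have h3 : f (l+1) = 0 := by simp [hf, Nat.choose_eq_zero_of_lt (Nat.lt_succ_self l)]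
        rw [h1, h2, h3, add_zero]
        exact ih D a ha (by omega)
      have hsecond : (∑ j ∈ range (l+1), (-1:ℤ)^(j+1) * (l.choose j) * ((D-(j+1)).choose (D-a)))
          = -(((D-1-l).choose (a-1)) : ℤ) := by
        have hDa : D - a = (D-1) - (a-1) := by omega
        have : ∀ j, (-1:ℤ)^(j+1) * (l.choose j) * ((D-(j+1)).choose (D-a))
            = -((-1:ℤ)^j * (l.choose j) * (((D-1)-j).choose ((D-1)-(a-1)))) := by
          intro j
          have hDj : D - (j+1) = (D-1) - j := by omega
          rw [hDj, hDa]
          ring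
        rw [Finset.sum_congr rfl (fun j _ => this j), Finset.sum_neg_distrib,
          ih (D-1) (a-1) (by omega) (by omega)]
      have hpascal : ((D-l).choose a : ℤ) - ((D-1-l).choose (a-1)) = ((D-(l+1)).choose a) := by
        have hDl : D - l = (D - l - 1) + 1 := by omega
        have ha' : a = (a - 1) + 1 := by omega
        rw [hDl, ha', Nat.choose_succ_succ']
        have e1 : D - 1 - l = D - l - 1 := by omega
        have e2 : D - (l+1) = D - l - 1 := by omega
        rw [e1, e2]
        push_cast
        ring
      calc ∑ k ∈ range (l+1+1), g k
          = (∑ j ∈ range (l+1), f (j+1)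
              + ∑ j ∈ range (l+1), (-1:ℤ)^(j+1) * (l.choose j) * ((D-(j+1)).choose (D-a))) + f 0 := by
            rw [hsplit, hsum1, hg0]
        _ = (((D-l).choose a) : ℤ) - ((D-1-l).choose (a-1)) := by
            rw [hsecond]
            have := hfirst
            linarith [hfirst]
        _ = ((D-(l+1)).choose a) := hpascal

/-- factorial/choose transfer identity -/
lemma fact_id (D a k : ℕ) (ha : a ≤ D) (hk : k ≤ D) :
    k ! * (D-k)! * (a.choose k) = a ! * (D-a)! * ((D-k).choose (D-a)) := by
  rcases le_or_gt k a with hka | hka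
  · have h1 : (a.choose k) * k ! * (a-k)! = a ! := Nat.choose_mul_factorial_mul_factorial hka
    have hge : D - a ≤ D - k := by omega
    have h2 : ((D-k).choose (D-a)) * (D-a)! * ((D-k)-(D-a))! = (D-k)! :=
      Nat.choose_mul_factorial_mul_factorial hge
    have h3 : (D-k)-(D-a) = a - k := by omega
    rw [h3] at h2
    have hne : 0 < (a-k)! := Nat.factorial_pos _
    apply Nat.eq_of_mul_eq_mul_right hne
    calc (k !) * ((D-k)!) * (a.choose k) * ((a-k)!)
        = ((a.choose k) * (k !) * ((a-k)!)) * ((D-k)!) := by ring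
      _ = (a !) * ((D-k)!) := by rw [h1]
      _ = (a !) * (((D-k).choose (D-a)) * ((D-a)!) * ((a-k)!)) := by rw [h2]
      _ = (a !) * ((D-a)!) * ((D-k).choose (D-a)) * ((a-k)!) := by ring
  · have h1 : a.choose k = 0 := Nat.choose_eq_zero_of_lt hka
    have h2 : (D-k).choose (D-a) = 0 := Nat.choose_eq_zero_of_lt (by omega)
    simp [h1, h2]

/-- the real-valued combined identity (†) -/
lemma dagger (D l a : ℕ) (ha : a ≤ D) (hl : l ≤ D) :
    ∑ k ∈ range (D+1), (-1:ℝ)^k * (k !) * ((D-k)!) * (l.choose k) * (a.choose k)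
      = (a !) * ((D-a)!) * ((D-l).choose a) := by
  have step1 : ∀ k ∈ range (D+1),
      (-1:ℝ)^k * (k !) * ((D-k)!) * (l.choose k) * (a.choose k)
        = ((a !) * ((D-a)!)) * ((-1:ℝ)^k * (l.choose k) * ((D-k).choose (D-a))) := by
    intro k hk
    simp only [Finset.mem_range] at hk
    have := fact_id D a k ha (by omega)
    have hc : ((k ! * (D-k)! * (a.choose k) : ℕ) : ℝ) = ((a ! * (D-a)! * ((D-k).choose (D-a)) : ℕ) : ℝ) := by
      exact_mod_cast congrArg (Nat.cast (R := ℝ)) this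
    push_cast at hc
    calc (-1:ℝ)^k * (k !) * ((D-k)!) * (l.choose k) * (a.choose k)
        = ((-1:ℝ)^k * (l.choose k)) * ((k !) * ((D-k)!) * (a.choose k)) := by ring
      _ = ((-1:ℝ)^k * (l.choose k)) * ((a !) * ((D-a)!) * ((D-k).choose (D-a))) := by rw [hc]
      _ = ((a !) * ((D-a)!)) * ((-1:ℝ)^k * (l.choose k) * ((D-k).choose (D-a))) := by ring
  rw [Finset.sum_congr rfl step1, ← Finset.mul_sum]
  have hzr : ∑ k ∈ range (D+1), (-1:ℝ)^k * (l.choose k) * ((D-k).choose (D-a))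
      = ((D-l).choose a : ℝ) := by
    have hsub : ∑ k ∈ range (l+1), (-1:ℝ)^k * (l.choose k) * ((D-k).choose (D-a))
        = ∑ k ∈ range (D+1), (-1:ℝ)^k * (l.choose k) * ((D-k).choose (D-a)) := by
      apply Finset.sum_subset
      · intro y hy; simp only [Finset.mem_range] at *; omega
      · intro y hy hy2
        simp only [Finset.mem_range] at hy hy2
        have : l.choose y = 0 := Nat.choose_eq_zero_of_lt (by omega)
        simp [this]
    rw [← hsub]
    exact_mod_cast zhu l D a ha hl
  rw [hzr]


def Nmat (m : ℕ) : Matrix (Fin m) (Fin m) ℝ :=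
  Matrix.of fun i j : Fin m => if (i : ℕ) + 1 = (j : ℕ) then (1 : ℝ) else 0

lemma Nmat_pow (m n : ℕ) (i j : Fin m) :
    ((Nmat m)^n) i j = if (i:ℕ) + n = (j:ℕ) then 1 else 0 := by
  induction n generalizing j with
  | zero =>
    rw [pow_zero, Matrix.one_apply]
    simp [Fin.ext_iff]
  | succ n ih =>
    rw [pow_succ, Matrix.mul_apply]
    by_cases h : (i:ℕ) + n < m
    · rw [Finset.sum_eq_single (⟨(i:ℕ)+n, h⟩ : Fin m)]
      · rw [ih]
        simp only [Nmat, Matrix.of_apply, Fin.val_mk]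
        simp [Nat.add_assoc]
      · intro c _ hc
        rw [ih]
        have : ¬((i:ℕ) + n = (c:ℕ)) := by
          intro hh
          apply hc
          apply Fin.ext
          simp [← hh]
        rw [if_neg this, zero_mul]
      · intro hmem; exact absurd (Finset.mem_univ _) hmem
    · have hz : ∀ c : Fin m, ((Nmat m)^n) i c * (Nmat m) c j = 0 := by
        intro c
        rw [ih]
        have : ¬((i:ℕ) + n = (c:ℕ)) := by
          intro hh; apply h; rw [hh]; exact c.isLt
        rw [if_neg this, zero_mul]
      rw [Finset.sum_congr rfl (fun c _ => hz c), Finset.sum_const_zero]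
      have : ¬((i:ℕ) + (n+1) = (j:ℕ)) := by
        have := j.isLt
        omega
      rw [if_neg this]

lemma Nmat_pow_eq_zero (m n : ℕ) (h : m ≤ n) : (Nmat m)^n = 0 := by
  ext i j
  rw [Nmat_pow]
  have : ¬((i:ℕ) + n = (j:ℕ)) := by have := j.isLt; omega
  rw [if_neg this]
  rfl

lemma expN (m : ℕ) (t : ℝ) :
    NormedSpace.exp (t • Nmat m) = ∑ n ∈ range m, (t^n / (n ! : ℝ)) • (Nmat m)^n := by
  have h0 : NormedSpace.exp (t • Nmat m) = ∑' (n:ℕ), ((n ! : ℝ))⁻¹ • (t • Nmat m)^n := by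
    rw [NormedSpace.exp_eq_tsum (𝕂 := ℝ)]
  rw [h0, tsum_eq_sum (s := range m) ?hvanish]
  case hvanish =>
    intro n hn
    simp only [Finset.mem_range, not_lt] at hn
    rw [_root_.smul_pow, Nmat_pow_eq_zero m n hn, smul_zero, smul_zero]
  apply Finset.sum_congr rfl
  intro n _
  rw [_root_.smul_pow, smul_smul]
  congr 1
  rw [div_eq_mul_inv, mul_comm]

lemma pick (m : ℕ) (c : ℕ) (u : Fin m → ℝ) :
    ∑ j : Fin m, (if c = (j:ℕ) then (1:ℝ) else 0) * u j
      = if h : c < m then u ⟨c,h⟩ else 0 := by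
  by_cases h : c < m
  · rw [dif_pos h, Finset.sum_eq_single (⟨c,h⟩ : Fin m)]
    · simp
    · intro b _ hb
      have : ¬(c = (b:ℕ)) := by
        intro hh; apply hb; apply Fin.ext; simp [← hh]
      rw [if_neg this, zero_mul]
    · intro hmem; exact absurd (Finset.mem_univ _) hmem
  · rw [dif_neg h]
    apply Finset.sum_eq_zero
    intro j _
    have : ¬(c = (j:ℕ)) := by have := j.isLt; omega
    rw [if_neg this, zero_mul]

lemma flow_apply (m : ℕ) (t : ℝ) (u : Fin m → ℝ) (i : Fin m) :
    jordanFlow m t u i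
      = ∑ n ∈ range m, t^n / (n ! : ℝ) * (if h : (i:ℕ)+n < m then u ⟨(i:ℕ)+n, h⟩ else 0) := by
  have : jordanFlow m t u i = ((NormedSpace.exp (t • Nmat m)).mulVec u) i := rfl
  rw [this, expN]
  rw [Matrix.mulVec, dotProduct]
  have hentry : ∀ j : Fin m, (∑ n ∈ range m, (t^n / (n ! : ℝ)) • (Nmat m)^n) i j
      = ∑ n ∈ range m, (t^n / (n ! : ℝ)) * (if (i:ℕ) + n = (j:ℕ) then 1 else 0) := by
    intro j
    rw [Matrix.sum_apply]
    apply Finset.sum_congr rfl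
    intro n _
    rw [Matrix.smul_apply, Nmat_pow]
    rfl
  rw [Finset.sum_congr rfl (fun j _ => by rw [hentry j])]
  simp only [Finset.sum_mul]
  rw [Finset.sum_comm]
  apply Finset.sum_congr rfl
  intro n _
  rw [← pick m ((i:ℕ)+n) u, Finset.mul_sum]
  apply Finset.sum_congr rfl
  intro j _
  ring



/-- coefficient expansion of the Taylor shift -/
lemma texp (D : ℕ) (q : Polynomial ℝ) (hq : ∀ j, D < j → q.coeff j = 0) (τ : ℝ) (k : ℕ) :
    (taylor τ q).coeff k = ∑ a ∈ range (D+1), q.coeff a * ((a.choose k : ℝ) * τ^(a-k)) := by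
  have hdeg : q.natDegree ≤ D := Polynomial.natDegree_le_iff_coeff_eq_zero.mpr hq
  have hrepr : q = ∑ a ∈ range (D+1), monomial a (q.coeff a) := by
    have := Polynomial.as_sum_range' q (D+1) (Nat.lt_succ_of_le hdeg)
    exact this
  conv_lhs => rw [hrepr]
  rw [map_sum, Polynomial.finset_sum_coeff]
  apply Finset.sum_congr rfl
  intro a _
  have hmono : taylor τ (monomial a (q.coeff a)) = C (q.coeff a) * (X + C τ)^a := by
    rw [taylor_apply, ← Polynomial.C_mul_X_pow_eq_monomial]
    simp [Polynomial.mul_comp, Polynomial.pow_comp]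
  rw [hmono, Polynomial.coeff_C_mul, Polynomial.coeff_X_add_C_pow]
  ring

/-- the polynomial attached to a vector -/
noncomputable def Pu (m : ℕ) (u : Fin m → ℝ) : Polynomial ℝ :=
  ∑ j : Fin m, monomial (j:ℕ) (u j / ((j:ℕ)! : ℝ))

lemma Pu_coeff (m : ℕ) (u : Fin m → ℝ) (a : ℕ) :
    (Pu m u).coeff a = if h : a < m then u ⟨a,h⟩ / ((a)! : ℝ) else 0 := by
  rw [Pu, Polynomial.finset_sum_coeff]
  have : ∀ j : Fin m, (monomial (j:ℕ) (u j / ((j:ℕ)! : ℝ))).coeff a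
      = if (j:ℕ) = a then u j / ((j:ℕ)! : ℝ) else 0 := fun j => Polynomial.coeff_monomial
  rw [Finset.sum_congr rfl (fun j _ => this j)]
  by_cases h : a < m
  · rw [dif_pos h, Finset.sum_eq_single (⟨a,h⟩ : Fin m)]
    · simp
    · intro b _ hb
      have : ¬((b:ℕ) = a) := by
        intro hh; apply hb; apply Fin.ext; simp [hh]
      rw [if_neg this]
    · intro hmem; exact absurd (Finset.mem_univ _) hmem
  · rw [dif_neg h]
    apply Finset.sum_eq_zero
    intro j _
    have : ¬((j:ℕ) = a) := by have := j.isLt; omega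
    rw [if_neg this]

lemma Pu_supp (m : ℕ) (u : Fin m → ℝ) (a : ℕ) (h : m ≤ a) : (Pu m u).coeff a = 0 := by
  rw [Pu_coeff, dif_neg (by omega)]




lemma flow_poly (m : ℕ) (hm : 0 < m) (t : ℝ) (u : Fin m → ℝ) (i : Fin m) :
    jordanFlow m t u i = (((i:ℕ)! : ℝ)) * (taylor t (Pu m u)).coeff (i:ℕ) := by
  have hm1 : m - 1 + 1 = m := Nat.succ_pred_eq_of_pos hm
  rw [flow_apply, texp (m-1) (Pu m u) (fun j hj => Pu_supp m u j (by omega)) t (i:ℕ), hm1]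
  rw [Finset.mul_sum]
  have step : ∀ a ∈ range m,
      ((i:ℕ)! : ℝ) * ((Pu m u).coeff a * ((a.choose (i:ℕ) : ℝ) * t^(a-(i:ℕ))))
        = (if h : a < m then u ⟨a,h⟩ else 0) * (((i:ℕ)! : ℝ) * ((a.choose (i:ℕ) : ℝ) / ((a)! : ℝ)) * t^(a-(i:ℕ))) := by
    intro a ha
    simp only [Finset.mem_range] at ha
    rw [Pu_coeff, dif_pos ha, dif_pos ha]
    ring
  rw [Finset.sum_congr rfl step]
  -- now reindex: RHS sum over a ∈ range m, nonzero only for i ≤ a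
  have hzero : ∀ a ∈ range m, a ∉ Finset.Ico (i:ℕ) m →
      (if h : a < m then u ⟨a,h⟩ else 0) * (((i:ℕ)! : ℝ) * ((a.choose (i:ℕ) : ℝ) / ((a)! : ℝ)) * t^(a-(i:ℕ))) = 0 := by
    intro a ha ha2
    simp only [Finset.mem_range] at ha
    simp only [Finset.mem_Ico] at ha2
    have hlt : a < (i:ℕ) := by omega
    rw [Nat.choose_eq_zero_of_lt hlt]
    simp
  have hIco : Finset.Ico (i:ℕ) m ⊆ range m := by
    intro a ha; simp only [Finset.mem_Ico] at ha; simp only [Finset.mem_range]; omega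
  rw [← Finset.sum_subset hIco hzero]
  rw [Finset.sum_Ico_eq_sum_range]
  -- LHS: trim to range (m - i)
  have hsub2 : range (m - (i:ℕ)) ⊆ range m := by
    intro a ha; simp only [Finset.mem_range] at *; omega
  have hzero2 : ∀ n ∈ range m, n ∉ range (m - (i:ℕ)) →
      t^n / ((n)! : ℝ) * (if h : (i:ℕ)+n < m then u ⟨(i:ℕ)+n, h⟩ else 0) = 0 := by
    intro n _ hn
    simp only [Finset.mem_range] at hn
    rw [dif_neg (by omega), mul_zero]
  rw [← Finset.sum_subset hsub2 hzero2]
  apply Finset.sum_congr rfl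
  intro n hn
  simp only [Finset.mem_range] at hn
  have hlt : (i:ℕ) + n < m := by omega
  rw [dif_pos hlt]
  have harith : (i:ℕ) + n - (i:ℕ) = n := by omega
  rw [harith]
  have hfact : ((i:ℕ)+n).choose (i:ℕ) * (i:ℕ)! * n ! = ((i:ℕ)+n)! := by
    have := Nat.choose_mul_factorial_mul_factorial (Nat.le_add_right (i:ℕ) n)
    simpa using this
  have hfactR : (((i:ℕ)! : ℝ)) * ((((i:ℕ)+n).choose (i:ℕ) : ℝ) / (((i:ℕ)+n)! : ℝ)) = 1 / ((n)! : ℝ) := by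
    have hne : (((i:ℕ)+n)! : ℝ) ≠ 0 := by exact_mod_cast (Nat.factorial_pos _).ne'
    have hne2 : ((n)! : ℝ) ≠ 0 := by exact_mod_cast (Nat.factorial_pos _).ne'
    have hcast : ((((i:ℕ)+n).choose (i:ℕ) : ℝ)) * ((i:ℕ)! : ℝ) * ((n)! : ℝ) = (((i:ℕ)+n)! : ℝ) := by
      exact_mod_cast congrArg (Nat.cast (R := ℝ)) hfact
    field_simp
    nlinarith [hcast]
  rw [hfactR]
  ring



/-- The master algebraic identity: the weighted sum of Taylor coefficients at τ
equals the weighted sum of coefficients at 0. -/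
lemma master_identity (D l : ℕ) (hl : l ≤ D) (τ : ℝ) (q : Polynomial ℝ)
    (hq : ∀ j, D < j → q.coeff j = 0) :
    ∑ k ∈ range (l+1), (-1:ℝ)^k * (k !) * ((D-k)!) * (l.choose k) * τ^k * (taylor τ q).coeff k
      = ∑ k ∈ range (D-l+1), (-1:ℝ)^k * (k !) * ((D-k)!) * ((D-l).choose k) * (-τ)^k * q.coeff k := by
  -- expand the taylor coefficients
  have hexp : ∀ k, (taylor τ q).coeff k = ∑ a ∈ range (D+1), q.coeff a * ((a.choose k : ℝ) * τ^(a-k)) :=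
    fun k => texp D q hq τ k
  calc ∑ k ∈ range (l+1), (-1:ℝ)^k * (k !) * ((D-k)!) * (l.choose k) * τ^k * (taylor τ q).coeff k
      = ∑ k ∈ range (l+1), ∑ a ∈ range (D+1),
          q.coeff a * ((-1:ℝ)^k * (k !) * ((D-k)!) * (l.choose k) * (a.choose k) * (τ^k * τ^(a-k))) := by
        apply Finset.sum_congr rfl
        intro k _
        rw [hexp k, Finset.mul_sum]
        apply Finset.sum_congr rfl
        intro a _
        ring
    _ = ∑ a ∈ range (D+1), q.coeff a *
          (∑ k ∈ range (l+1), (-1:ℝ)^k * (k !) * ((D-k)!) * (l.choose k) * (a.choose k) * (τ^k * τ^(a-k))) := by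
        rw [Finset.sum_comm]
        apply Finset.sum_congr rfl
        intro a _
        rw [Finset.mul_sum]
    _ = ∑ a ∈ range (D+1), q.coeff a * (τ^a * ((a !) * (((D-a)!) * ((D-l).choose a)))) := by
        apply Finset.sum_congr rfl
        intro a ha
        simp only [Finset.mem_range] at ha
        congr 1
        -- inner sum evaluates via dagger
        have hterm : ∀ k ∈ range (l+1),
            (-1:ℝ)^k * (k !) * ((D-k)!) * (l.choose k) * (a.choose k) * (τ^k * τ^(a-k))
              = ((-1:ℝ)^k * (k !) * ((D-k)!) * (l.choose k) * (a.choose k)) * τ^a := by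
          intro k _
          by_cases hka : k ≤ a
          · rw [← pow_add]
            congr 2
            omega
          · rw [Nat.choose_eq_zero_of_lt (show a < k by omega)]
            push_cast
            ring
        rw [Finset.sum_congr rfl hterm, ← Finset.sum_mul]
        have hext : ∑ k ∈ range (l+1), (-1:ℝ)^k * (k !) * ((D-k)!) * (l.choose k) * (a.choose k)
            = ∑ k ∈ range (D+1), (-1:ℝ)^k * (k !) * ((D-k)!) * (l.choose k) * (a.choose k) := by
          apply Finset.sum_subset
          · intro y hy; simp only [Finset.mem_range] at *; omega
          · intro y _ hy2
            simp only [Finset.mem_range] at hy2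
            rw [Nat.choose_eq_zero_of_lt (show l < y by omega)]
            push_cast; ring
        rw [hext, dagger D l a (by omega) hl]
        ring
    _ = ∑ k ∈ range (D-l+1), (-1:ℝ)^k * (k !) * ((D-k)!) * ((D-l).choose k) * (-τ)^k * q.coeff k := by
        -- rewrite RHS in the same indexed form and compare
        have hrhs : ∀ k ∈ range (D+1),
            q.coeff k * (τ^k * ((k !) * (((D-k)!) * ((D-l).choose k))))
              = (-1:ℝ)^k * (k !) * ((D-k)!) * ((D-l).choose k) * (-τ)^k * q.coeff k := by
          intro k _
          have : (-τ:ℝ)^k = (-1)^k * τ^k := by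
            rw [neg_pow]
          have hsq : ((-1:ℝ)^k) * ((-1:ℝ)^k) = 1 := by
            rw [← pow_add, ← two_mul, pow_mul]
            norm_num
          calc q.coeff k * (τ^k * ((k ! : ℝ) * (((D-k)! : ℝ) * ((D-l).choose k))))
              = (((-1:ℝ)^k) * ((-1:ℝ)^k)) * ((k ! : ℝ) * ((D-k)! : ℝ) * ((D-l).choose k) * τ^k * q.coeff k) := by
                rw [hsq]; ring
            _ = (-1:ℝ)^k * (k !) * ((D-k)!) * ((D-l).choose k) * (-τ)^k * q.coeff k := by
                rw [this]; ring
        rw [Finset.sum_congr rfl hrhs]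
        symm
        apply Finset.sum_subset
        · intro y hy; simp only [Finset.mem_range] at *; omega
        · intro y _ hy2
          simp only [Finset.mem_range] at hy2
          rw [Nat.choose_eq_zero_of_lt (show D - l < y by omega)]
          push_cast; ring



lemma master (D l : ℕ) (hl : l ≤ D) (q : ℕ → Polynomial ℝ) (τ : ℕ → ℝ) (Mb : ℕ → ℝ) (z : ℕ → ℝ)
    (hsupp : ∀ n j, D < j → (q n).coeff j = 0)
    (hbd : ∀ n k, |(q n).coeff k| ≤ Mb n)
    (hτ : Tendsto (fun n => |τ n|) atTop atTop)
    (hjets : ∀ k, k ≤ D → Tendsto (fun n => (taylor (τ n) (q n)).coeff k) atTop (𝓝 (z k)))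
    (hsc : Tendsto (fun n => Mb n * (|τ n| ^ D / |τ n| ^ (2*l))) atTop (𝓝 0)) :
    z l = 0 := by
  have hev1 : ∀ᶠ n in atTop, 1 ≤ |τ n| := hτ.eventually_ge_atTop 1
  have hMb0 : ∀ n, 0 ≤ Mb n := fun n => le_trans (abs_nonneg _) (hbd n 0)
  set c : ℕ → ℝ := fun k => (-1:ℝ)^k * (k !) * ((D-k)!) * (l.choose k) with hc
  set F : ℕ → ℝ := fun n =>
    (∑ k ∈ range (l+1), c k * (τ n)^k * (taylor (τ n) (q n)).coeff k) / (τ n)^l with hF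
  -- Step A : F tends to c l * z l
  have hA : Tendsto F atTop (𝓝 (c l * z l)) := by
    have hlim : Tendsto (fun n => ∑ k ∈ range (l+1),
        c k * ((τ n)^k / (τ n)^l) * (taylor (τ n) (q n)).coeff k) atTop
        (𝓝 (∑ k ∈ range (l+1), if k = l then c l * z l else 0)) := by
      apply tendsto_finset_sum
      intro k hk
      simp only [Finset.mem_range] at hk
      by_cases hkl : k = l
      · subst hkl
        simp only [if_pos rfl]
        have heq : (fun n => c k * (taylor (τ n) (q n)).coeff k)
            =ᶠ[atTop] (fun n => c k * ((τ n)^k / (τ n)^k) * (taylor (τ n) (q n)).coeff k) := by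
          filter_upwards [hev1] with n hn
          have hτne : (τ n) ≠ 0 := by
            intro h; rw [h] at hn; simp at hn; linarith
          rw [div_self (pow_ne_zero _ hτne), mul_one]
        exact Tendsto.congr' heq ((hjets k (by omega)).const_mul (c k))
      · rw [if_neg hkl]
        have hkl' : k < l := by omega
        have h1 : Tendsto (fun n => (τ n)^k / (τ n)^l) atTop (𝓝 0) := by
          apply squeeze_zero_norm' (a := fun n => |τ n|⁻¹)
          · filter_upwards [hev1] with n hn
            rw [Real.norm_eq_abs, abs_div, abs_pow, abs_pow]
            have hpos : (0:ℝ) < |τ n| := lt_of_lt_of_le one_pos hn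
            rw [div_le_iff₀ (by positivity)]
            calc |τ n|^k ≤ |τ n|^(l-1) := pow_le_pow_right₀ hn (by omega)
              _ = |τ n|⁻¹ * |τ n|^l := by
                  rw [show l = (l-1)+1 by omega]
                  rw [pow_succ]
                  have : l - 1 + 1 - 1 = l - 1 := by omega
                  rw [this]
                  field_simp
          · exact hτ.inv_tendsto_atTop
        have h2 := (h1.const_mul (c k)).mul (hjets k (by omega))
        simpa using h2
    have hsum : (∑ k ∈ range (l+1), if k = l then c l * z l else 0) = c l * z l := by
      rw [Finset.sum_ite_eq' (range (l+1)) l (fun _ => c l * z l)]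
      simp
    rw [hsum] at hlim
    apply Tendsto.congr' _ hlim
    filter_upwards [hev1] with n hn
    have hτne : (τ n) ≠ 0 := by
      intro h; rw [h] at hn; simp at hn; linarith
    simp only [hF]
    rw [Finset.sum_div]
    apply Finset.sum_congr rfl
    intro k _
    ring
  -- Step B : F tends to 0
  set CB : ℝ := ∑ k ∈ range (D-l+1), (k ! : ℝ) * ((D-k)! : ℝ) * ((D-l).choose k) with hCB
  have hCB0 : 0 ≤ CB := Finset.sum_nonneg (fun k _ => by positivity)
  have hB : Tendsto F atTop (𝓝 0) := by
    apply squeeze_zero_norm' (a := fun n => CB * (Mb n * (|τ n| ^ D / |τ n| ^ (2*l))))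
    · filter_upwards [hev1] with n hn
      have hτpos : (0:ℝ) < |τ n| := lt_of_lt_of_le one_pos hn
      have hid := master_identity D l hl (τ n) (q n) (hsupp n)
      have hFn : F n = (∑ k ∈ range (D-l+1),
          (-1:ℝ)^k * (k !) * ((D-k)!) * ((D-l).choose k) * (-(τ n))^k * (q n).coeff k) / (τ n)^l := by
        simp only [hF, hc]
        rw [hid]
      rw [Real.norm_eq_abs, hFn, abs_div, abs_pow]
      have hnum : |∑ k ∈ range (D-l+1),
          (-1:ℝ)^k * (k !) * ((D-k)!) * ((D-l).choose k) * (-(τ n))^k * (q n).coeff k|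
          ≤ CB * (Mb n * |τ n|^(D-l)) := by
        calc |∑ k ∈ range (D-l+1),
            (-1:ℝ)^k * (k !) * ((D-k)!) * ((D-l).choose k) * (-(τ n))^k * (q n).coeff k|
            ≤ ∑ k ∈ range (D-l+1),
              |(-1:ℝ)^k * (k !) * ((D-k)!) * ((D-l).choose k) * (-(τ n))^k * (q n).coeff k| :=
              Finset.abs_sum_le_sum_abs _ _
          _ ≤ ∑ k ∈ range (D-l+1),
              ((k ! : ℝ) * ((D-k)! : ℝ) * ((D-l).choose k)) * (Mb n * |τ n|^(D-l)) := by
              apply Finset.sum_le_sum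
              intro k hks
              simp only [Finset.mem_range] at hks
              have e1 : |(-1:ℝ)^k * (k !) * ((D-k)!) * ((D-l).choose k) * (-(τ n))^k * (q n).coeff k|
                  = ((k ! : ℝ) * ((D-k)! : ℝ) * ((D-l).choose k)) * (|τ n|^k * |(q n).coeff k|) := by
                rw [abs_mul, abs_mul, abs_mul, abs_mul, abs_mul, abs_pow, abs_pow,
                  abs_neg, abs_neg, abs_one, one_pow, Nat.abs_cast, Nat.abs_cast, Nat.abs_cast]
                ring
              rw [e1]
              apply mul_le_mul_of_nonneg_left _ (by positivity)
              have h3 : |τ n|^k ≤ |τ n|^(D-l) := pow_le_pow_right₀ hn (by omega)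
              have h4 : |(q n).coeff k| ≤ Mb n := hbd n k
              calc |τ n|^k * |(q n).coeff k| ≤ |τ n|^(D-l) * Mb n := by
                    apply mul_le_mul h3 h4 (abs_nonneg _) (by positivity)
                _ = Mb n * |τ n|^(D-l) := by ring
          _ = CB * (Mb n * |τ n|^(D-l)) := by rw [← Finset.sum_mul]
      calc |∑ k ∈ range (D-l+1),
            (-1:ℝ)^k * (k !) * ((D-k)!) * ((D-l).choose k) * (-(τ n))^k * (q n).coeff k| / |τ n|^l
          ≤ (CB * (Mb n * |τ n|^(D-l))) / |τ n|^l := by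
            apply div_le_div_of_nonneg_right hnum (by positivity)
        _ = CB * (Mb n * (|τ n| ^ D / |τ n| ^ (2*l))) := by
            have hpow1 : |τ n|^D = |τ n|^(D-l) * |τ n|^l := by
              rw [← pow_add]; congr 1; omega
            have hpow2 : |τ n|^(2*l) = |τ n|^l * |τ n|^l := by
              rw [← pow_add]; congr 1; omega
            rw [hpow1, hpow2]
            have hne : |τ n|^l ≠ 0 := by positivity
            field_simp
    · have := hsc.const_mul CB
      simpa using this
  have hzero : c l * z l = 0 := tendsto_nhds_unique hA hB
  have hcl : c l ≠ 0 := by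
    simp only [hc, Nat.choose_self, Nat.cast_one, mul_one]
    apply mul_ne_zero (mul_ne_zero (pow_ne_zero l (by norm_num : (-1:ℝ) ≠ 0))
      (Nat.cast_ne_zero.mpr (Nat.factorial_ne_zero l)))
      (Nat.cast_ne_zero.mpr (Nat.factorial_ne_zero (D-l)))
  exact (mul_eq_zero.mp hzero).resolve_left hcl



lemma core_upper (d : ℕ) (x : Fin (2*d+1) → ℝ) (u : ℕ → Fin (2*d+1) → ℝ) (t : ℕ → ℝ) (Mb : ℕ → ℝ)
    (hu : Tendsto u atTop (𝓝 x)) (ht : Tendsto (fun n => |t n|) atTop atTop)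
    (hΦ : ∀ n, ‖jordanFlow (2*d+1) (t n) (u n)‖ ≤ Mb n)
    (l : ℕ) (hlm : l < 2*d+1)
    (hsc : Tendsto (fun n => Mb n * (|t n| ^ (2*d) / |t n| ^ (2*l))) atTop (𝓝 0)) :
    x ⟨l, hlm⟩ = 0 := by
  have hl : l ≤ 2*d := by omega
  set q : ℕ → Polynomial ℝ := fun n => taylor (t n) (Pu (2*d+1) (u n)) with hqdef
  have hMb0 : ∀ n, 0 ≤ Mb n := fun n => le_trans (norm_nonneg _) (hΦ n)
  have hq_supp : ∀ n j, 2*d < j → (q n).coeff j = 0 := by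
    intro n j hj
    simp only [hqdef]
    rw [texp (2*d) (Pu (2*d+1) (u n)) (fun a ha => Pu_supp (2*d+1) (u n) a (by omega)) (t n) j]
    apply Finset.sum_eq_zero
    intro a ha
    simp only [Finset.mem_range] at ha
    rw [Nat.choose_eq_zero_of_lt (show a < j by omega)]
    push_cast
    ring
  have hq_coeff : ∀ n (k : ℕ) (hk : k < 2*d+1),
      (q n).coeff k = jordanFlow (2*d+1) (t n) (u n) ⟨k, hk⟩ / ((k)! : ℝ) := by
    intro n k hk
    have := flow_poly (2*d+1) (by omega) (t n) (u n) ⟨k, hk⟩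
    simp only [Fin.val_mk] at this
    rw [this]
    have hkne : ((k)! : ℝ) ≠ 0 := Nat.cast_ne_zero.mpr (Nat.factorial_ne_zero k)
    field_simp [hqdef]
    rfl
  have hbd : ∀ n k, |(q n).coeff k| ≤ Mb n := by
    intro n k
    by_cases hk : k < 2*d+1
    · rw [hq_coeff n k hk]
      have h1 : (1:ℝ) ≤ ((k)! : ℝ) := by exact_mod_cast Nat.one_le_iff_ne_zero.mpr (Nat.factorial_ne_zero k)
      have h2 : |jordanFlow (2*d+1) (t n) (u n) ⟨k, hk⟩| ≤ Mb n := by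
        calc |jordanFlow (2*d+1) (t n) (u n) ⟨k, hk⟩|
            = ‖jordanFlow (2*d+1) (t n) (u n) ⟨k, hk⟩‖ := (Real.norm_eq_abs _).symm
          _ ≤ ‖jordanFlow (2*d+1) (t n) (u n)‖ := norm_le_pi_norm _ _
          _ ≤ Mb n := hΦ n
      rw [abs_div]
      rw [abs_of_nonneg (show (0:ℝ) ≤ ((k)! : ℝ) by positivity)]
      calc |jordanFlow (2*d+1) (t n) (u n) ⟨k, hk⟩| / ((k)! : ℝ)
          ≤ |jordanFlow (2*d+1) (t n) (u n) ⟨k, hk⟩| / 1 := by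
            apply div_le_div_of_nonneg_left (abs_nonneg _) one_pos h1
          _ = |jordanFlow (2*d+1) (t n) (u n) ⟨k, hk⟩| := div_one _
          _ ≤ Mb n := h2
    · rw [hq_supp n k (by omega), abs_zero]
      exact hMb0 n
  set z : ℕ → ℝ := fun k => if h : k < 2*d+1 then x ⟨k, h⟩ / ((k)! : ℝ) else 0 with hzdef
  have hjets : ∀ k, k ≤ 2*d → Tendsto (fun n => (taylor (-(t n)) (q n)).coeff k) atTop (𝓝 (z k)) := by
    intro k hk
    have hkm : k < 2*d+1 := by omega
    have hback : ∀ n, (taylor (-(t n)) (q n)).coeff k = u n ⟨k, hkm⟩ / ((k)! : ℝ) := by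
      intro n
      simp only [hqdef]
      rw [taylor_taylor]
      rw [show -(t n) + t n = 0 by ring, taylor_zero]
      rw [Pu_coeff, dif_pos hkm]
    rw [show (fun n => (taylor (-(t n)) (q n)).coeff k) = fun n => u n ⟨k, hkm⟩ / ((k)! : ℝ) from funext hback]
    simp only [hzdef, dif_pos hkm]
    exact (tendsto_pi_nhds.mp hu ⟨k, hkm⟩).div_const _
  have hτ' : Tendsto (fun n => |(-(t n))|) atTop atTop := by
    simpa [abs_neg] using ht
  have hsc' : Tendsto (fun n => Mb n * (|(-(t n))| ^ (2*d) / |(-(t n))| ^ (2*l))) atTop (𝓝 0) := by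
    simpa [abs_neg] using hsc
  have hz := master (2*d) l hl q (fun n => -(t n)) Mb z hq_supp hbd hτ' hjets hsc'
  simp only [hzdef, dif_pos (show l < 2*d+1 from hlm)] at hz
  have hkne : ((l)! : ℝ) ≠ 0 := Nat.cast_ne_zero.mpr (Nat.factorial_ne_zero l)
  exact (div_eq_zero_iff.mp hz).resolve_right hkne



lemma ratio_le_inv (T : ℝ) (hn : 1 ≤ |T|) (a b : ℕ) (h : a + 1 ≤ b) :
    |T| ^ a / |T| ^ b ≤ |T|⁻¹ := by
  have hpos : (0:ℝ) < |T| := lt_of_lt_of_le one_pos hn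
  rw [div_le_iff₀ (by positivity : (0:ℝ) < |T|^b), inv_mul_eq_div, le_div_iff₀ hpos]
  calc |T|^a * |T| = |T|^(a+1) := (pow_succ _ _).symm
    _ ≤ |T|^b := pow_le_pow_right₀ hn h

lemma ratio_le_one (T : ℝ) (hn : 1 ≤ |T|) (a b : ℕ) (h : a ≤ b) :
    |T| ^ a / |T| ^ b ≤ 1 := by
  have hpos : (0:ℝ) < |T| := lt_of_lt_of_le one_pos hn
  rw [div_le_one (by positivity : (0:ℝ) < |T|^b)]
  exact pow_le_pow_right₀ hn h

lemma hsc_const (M : ℝ) (hM : 0 ≤ M) (t : ℕ → ℝ) (ht : Tendsto (fun n => |t n|) atTop atTop)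
    (d l : ℕ) (h : 2*d+1 ≤ 2*l) :
    Tendsto (fun n => M * (|t n| ^ (2*d) / |t n| ^ (2*l))) atTop (𝓝 0) := by
  apply squeeze_zero_norm' (a := fun n => M * |t n|⁻¹)
  · filter_upwards [ht.eventually_ge_atTop 1] with n hn
    have hr : |t n| ^ (2*d) / |t n| ^ (2*l) ≤ |t n|⁻¹ := ratio_le_inv _ hn _ _ h
    have hr0 : (0:ℝ) ≤ |t n| ^ (2*d) / |t n| ^ (2*l) := by positivity
    rw [Real.norm_eq_abs, abs_of_nonneg (mul_nonneg hM hr0)]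
    exact mul_le_mul_of_nonneg_left hr hM
  · have := ht.inv_tendsto_atTop.const_mul M
    simpa using this

lemma hsc_vanish (Mb : ℕ → ℝ) (hMb0 : ∀ n, 0 ≤ Mb n) (hMb : Tendsto Mb atTop (𝓝 0))
    (t : ℕ → ℝ) (ht : Tendsto (fun n => |t n|) atTop atTop) (d l : ℕ) (h : 2*d ≤ 2*l) :
    Tendsto (fun n => Mb n * (|t n| ^ (2*d) / |t n| ^ (2*l))) atTop (𝓝 0) := by
  apply squeeze_zero_norm' (a := Mb)
  · filter_upwards [ht.eventually_ge_atTop 1] with n hn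
    have hr : |t n| ^ (2*d) / |t n| ^ (2*l) ≤ 1 := ratio_le_one _ hn _ _ h
    have hr0 : (0:ℝ) ≤ |t n| ^ (2*d) / |t n| ^ (2*l) := by positivity
    rw [Real.norm_eq_abs, abs_of_nonneg (mul_nonneg (hMb0 n) hr0)]
    calc Mb n * (|t n| ^ (2*d) / |t n| ^ (2*l)) ≤ Mb n * 1 := mul_le_mul_of_nonneg_left hr (hMb0 n)
      _ = Mb n := mul_one _
  · exact hMb

lemma coreC_sub (d : ℕ) :
    jordanCoreC (2*d+1) ⊆ {x : Fin (2*d+1) → ℝ | ∀ i : Fin (2*d+1), d + 1 ≤ (i:ℕ) → x i = 0} := by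
  intro x hx
  obtain ⟨tp, tm, up, um, htp, htm, hup, hum, ⟨M, hM⟩, _⟩ := hx
  intro i hi
  have hM0 : 0 ≤ M := le_trans (norm_nonneg _) (hM 0)
  have htabs : Tendsto (fun n => |tp n|) atTop atTop := tendsto_abs_atTop_atTop.comp htp
  have h := core_upper d x up tp (fun _ => M) hup htabs hM (i:ℕ) i.isLt
    (hsc_const M hM0 tp htabs d (i:ℕ) (by omega))
  simpa using h

lemma coreC0_sub (d : ℕ) :
    jordanCoreC0 (2*d+1) ⊆ {x : Fin (2*d+1) → ℝ | ∀ i : Fin (2*d+1), d ≤ (i:ℕ) → x i = 0} := by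
  intro x hx
  obtain ⟨tp, tm, up, um, htp, htm, hup, hum, hc0, _⟩ := hx
  intro i hi
  have htabs : Tendsto (fun n => |tp n|) atTop atTop := tendsto_abs_atTop_atTop.comp htp
  set Mb : ℕ → ℝ := fun n => ‖jordanFlow (2*d+1) (tp n) (up n)‖ with hMbdef
  have hMb0 : ∀ n, 0 ≤ Mb n := fun n => norm_nonneg _
  have hMblim : Tendsto Mb atTop (𝓝 0) := by
    have := tendsto_zero_iff_norm_tendsto_zero.mp hc0
    simpa [hMbdef] using this
  have h := core_upper d x up tp Mb hup htabs (fun n => le_refl _) (i:ℕ) i.isLt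
    (hsc_vanish Mb hMb0 hMblim tp htabs d (i:ℕ) (by omega))
  simpa using h



noncomputable def qx (m K : ℕ) (x : Fin m → ℝ) : Polynomial ℝ :=
  ∑ j ∈ range K, monomial j (if h : j < m then x ⟨j,h⟩ / ((j)! : ℝ) else 0)

lemma qx_coeff (m K : ℕ) (x : Fin m → ℝ) (a : ℕ) :
    (qx m K x).coeff a =
      if a < K then (if h : a < m then x ⟨a,h⟩ / ((a)! : ℝ) else 0) else 0 := by
  rw [qx, Polynomial.finset_sum_coeff]
  rw [Finset.sum_congr rfl (fun j _ => Polynomial.coeff_monomial)]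
  rw [Finset.sum_ite_eq' (range K) a]
  simp [Finset.mem_range]

lemma qx_supp (m K : ℕ) (x : Fin m → ℝ) (a : ℕ) (h : K ≤ a) : (qx m K x).coeff a = 0 := by
  rw [qx_coeff, if_neg (by omega)]

noncomputable def pt (m K e : ℕ) (x : Fin m → ℝ) (t : ℝ) : Polynomial ℝ :=
  Polynomial.C ((-t⁻¹)^e) * (qx m K x * (Polynomial.X - Polynomial.C t)^e)

lemma taylor_pow' (r : ℝ) (p : Polynomial ℝ) (n : ℕ) : taylor r (p^n) = (taylor r p)^n := by
  induction n with
  | zero => simp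
  | succ n ih => rw [pow_succ, taylor_mul, ih, pow_succ]

lemma taylor_pt (m K e : ℕ) (x : Fin m → ℝ) (t : ℝ) :
    taylor t (pt m K e x t)
      = Polynomial.C ((-t⁻¹)^e) * (taylor t (qx m K x) * Polynomial.X^e) := by
  rw [pt, taylor_mul, taylor_C, taylor_mul, taylor_pow']
  have h1 : taylor t (Polynomial.X - Polynomial.C t) = Polynomial.X := by
    rw [map_sub, taylor_X, taylor_C]
    ring
  rw [h1]

lemma pt_coeff (m K e : ℕ) (x : Fin m → ℝ) (t : ℝ) (hts : t ≠ 0) (j : ℕ) :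
    (pt m K e x t).coeff j
      = ∑ p ∈ antidiagonal j, (qx m K x).coeff p.1 * ((e.choose p.2 : ℝ) * (-t⁻¹)^p.2) := by
  rw [pt, Polynomial.coeff_C_mul, Polynomial.coeff_mul, Finset.mul_sum]
  apply Finset.sum_congr rfl
  intro p hp
  have hXC : ((Polynomial.X - Polynomial.C t)^e).coeff p.2 = (-t)^(e - p.2) * (e.choose p.2) := by
    have h2 : (Polynomial.X - Polynomial.C t) = (Polynomial.X + Polynomial.C (-t)) := by
      rw [map_neg]; ring
    rw [h2, Polynomial.coeff_X_add_C_pow]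
  rw [hXC]
  by_cases hbe : p.2 ≤ e
  · have hs : (-t) ≠ 0 := neg_ne_zero.mpr hts
    have h1 : (-t⁻¹) = (-t)⁻¹ := by field_simp
    have key : (-t⁻¹)^e * (-t)^(e - p.2) = (-t⁻¹)^p.2 := by
      rw [h1, inv_pow, inv_pow]
      field_simp
      rw [← pow_add]
      congr 1
      omega
    calc (-t⁻¹)^e * ((qx m K x).coeff p.1 * ((-t)^(e - p.2) * (e.choose p.2)))
        = ((-t⁻¹)^e * (-t)^(e - p.2)) * ((qx m K x).coeff p.1 * (e.choose p.2)) := by ring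
      _ = (-t⁻¹)^p.2 * ((qx m K x).coeff p.1 * (e.choose p.2)) := by rw [key]
      _ = (qx m K x).coeff p.1 * ((e.choose p.2 : ℝ) * (-t⁻¹)^p.2) := by ring
  · rw [Nat.choose_eq_zero_of_lt (show e < p.2 by omega)]
    push_cast
    ring

lemma pt_supp (m K e : ℕ) (x : Fin m → ℝ) (t : ℝ) (hts : t ≠ 0) (hKe : K + e = m)
    (j : ℕ) (hj : m ≤ j) : (pt m K e x t).coeff j = 0 := by
  rw [pt_coeff m K e x t hts j]
  apply Finset.sum_eq_zero
  intro p hp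
  rw [Finset.HasAntidiagonal.mem_antidiagonal] at hp
  by_cases ha : p.1 < K
  · rw [Nat.choose_eq_zero_of_lt (show e < p.2 by omega)]
    push_cast; ring
  · rw [qx_supp m K x p.1 (by omega)]
    ring

lemma Pu_eq (m : ℕ) (p : Polynomial ℝ) (hp : ∀ j, m ≤ j → p.coeff j = 0) :
    Pu m (fun j => (((j:ℕ))! : ℝ) * p.coeff (j:ℕ)) = p := by
  apply Polynomial.ext
  intro a
  rw [Pu_coeff]
  by_cases h : a < m
  · rw [dif_pos h]
    have hne : ((a)! : ℝ) ≠ 0 := Nat.cast_ne_zero.mpr (Nat.factorial_ne_zero a)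
    field_simp
  · rw [dif_neg h, (hp a (by omega))]

lemma flow_of_poly (m : ℕ) (hm : 0 < m) (t : ℝ) (p : Polynomial ℝ)
    (hp : ∀ j, m ≤ j → p.coeff j = 0) (i : Fin m) :
    jordanFlow m t (fun j => (((j:ℕ))! : ℝ) * p.coeff (j:ℕ)) i
      = (((i:ℕ))! : ℝ) * (taylor t p).coeff (i:ℕ) := by
  rw [flow_poly m hm t _ i, Pu_eq m p hp]

lemma jordanFlow_zero (m : ℕ) (t : ℝ) : jordanFlow m t 0 = 0 := by
  unfold jordanFlow
  exact Matrix.mulVec_zero (_ : Matrix (Fin m) (Fin m) ℝ)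



lemma constr (d K e : ℕ) (hKe : K + e = 2*d+1) (hK : 1 ≤ K) (he : 1 ≤ e)
    (x : Fin (2*d+1) → ℝ) (hx : ∀ i : Fin (2*d+1), K ≤ (i:ℕ) → x i = 0)
    (t : ℕ → ℝ) (ht : Tendsto (fun n => |t n|) atTop atTop) :
    ∃ u : ℕ → Fin (2*d+1) → ℝ, Tendsto u atTop (𝓝 x) ∧ ∃ CB : ℝ, 0 ≤ CB ∧
      (∀ n, 1 ≤ |t n| → ∀ i : Fin (2*d+1),
        |jordanFlow (2*d+1) (t n) (u n) i| ≤ CB * (|t n| ^ (K-1) / |t n| ^ e)) ∧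
      (∀ n, ¬(1 ≤ |t n|) → jordanFlow (2*d+1) (t n) (u n) = 0) := by
  have hm : 0 < 2*d+1 := by omega
  set u : ℕ → Fin (2*d+1) → ℝ := fun n =>
    if 1 ≤ |t n| then (fun j => (((j:ℕ))! : ℝ) * (pt (2*d+1) K e x (t n)).coeff (j:ℕ)) else 0 with hudef
  refine ⟨u, ?htendsto, ?hbound⟩
  case htendsto =>
    rw [tendsto_pi_nhds]
    intro j
    set Cj : ℝ := (((j:ℕ))! : ℝ) *
      ∑ p ∈ antidiagonal (j:ℕ), |(qx (2*d+1) K x).coeff p.1| * ((e.choose p.2 : ℝ)) with hCjdef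
    have hxq : x j = (((j:ℕ))! : ℝ) * (qx (2*d+1) K x).coeff (j:ℕ) := by
      rw [qx_coeff]
      by_cases hjK : (j:ℕ) < K
      · rw [if_pos hjK, dif_pos j.isLt]
        have hne : (((j:ℕ))! : ℝ) ≠ 0 := Nat.cast_ne_zero.mpr (Nat.factorial_ne_zero _)
        rw [Fin.eta]
        field_simp
      · rw [if_neg hjK, mul_zero]
        exact hx j (by omega)
    have hdiff : ∀ n, 1 ≤ |t n| → |u n j - x j| ≤ Cj * |t n|⁻¹ := by
      intro n hn
      have hts : t n ≠ 0 := by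
        intro h0; rw [h0] at hn; norm_num at hn
      have hun : u n j = (((j:ℕ))! : ℝ) * (pt (2*d+1) K e x (t n)).coeff (j:ℕ) := by
        rw [hudef]; simp only [if_pos hn]
      set g : ℕ × ℕ → ℝ := fun p =>
        (qx (2*d+1) K x).coeff p.1 * ((e.choose p.2 : ℝ) * (-(t n)⁻¹)^p.2) with hgdef
      have hptc : (pt (2*d+1) K e x (t n)).coeff (j:ℕ) = ∑ p ∈ antidiagonal (j:ℕ), g p :=
        pt_coeff (2*d+1) K e x (t n) hts (j:ℕ)
      have hmem : ((j:ℕ), 0) ∈ antidiagonal (j:ℕ) := by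
        simp [Finset.mem_antidiagonal]
      have hg0 : g ((j:ℕ), 0) = (qx (2*d+1) K x).coeff (j:ℕ) := by
        simp [hgdef]
      have hsplit : ∑ p ∈ antidiagonal (j:ℕ), g p
          = ∑ p ∈ (antidiagonal (j:ℕ)).erase ((j:ℕ), 0), g p + g ((j:ℕ), 0) :=
        (Finset.sum_erase_add _ _ hmem).symm
      have hrest : |∑ p ∈ (antidiagonal (j:ℕ)).erase ((j:ℕ), 0), g p|
          ≤ (∑ p ∈ antidiagonal (j:ℕ), |(qx (2*d+1) K x).coeff p.1| * ((e.choose p.2 : ℝ))) * |t n|⁻¹ := by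
        calc |∑ p ∈ (antidiagonal (j:ℕ)).erase ((j:ℕ), 0), g p|
            ≤ ∑ p ∈ (antidiagonal (j:ℕ)).erase ((j:ℕ), 0), |g p| :=
              Finset.abs_sum_le_sum_abs _ _
          _ ≤ ∑ p ∈ (antidiagonal (j:ℕ)).erase ((j:ℕ), 0),
              (|(qx (2*d+1) K x).coeff p.1| * ((e.choose p.2 : ℝ))) * |t n|⁻¹ := by
              apply Finset.sum_le_sum
              intro p hp
              have hp2 : 1 ≤ p.2 := by
                rcases Finset.mem_erase.mp hp with ⟨hne, hmem2⟩
                rw [Finset.HasAntidiagonal.mem_antidiagonal] at hmem2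
                rcases Nat.eq_zero_or_pos p.2 with h0 | h1
                · exfalso; apply hne
                  have : p.1 = (j:ℕ) := by omega
                  exact Prod.ext this h0
                · exact h1
              have habs : |g p| = |(qx (2*d+1) K x).coeff p.1| * ((e.choose p.2 : ℝ)) * (|t n|⁻¹)^p.2 := by
                rw [hgdef]
                rw [abs_mul, abs_mul, abs_pow, abs_neg, abs_inv, Nat.abs_cast]
                ring
              rw [habs]
              apply mul_le_mul_of_nonneg_left _ (by positivity)
              have hinv1 : |t n|⁻¹ ≤ 1 := by
                rw [inv_le_one_iff₀]
                right; linarith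
              have hinv0 : (0:ℝ) ≤ |t n|⁻¹ := by positivity
              calc (|t n|⁻¹)^p.2 ≤ (|t n|⁻¹)^1 := pow_le_pow_of_le_one hinv0 hinv1 hp2
                _ = |t n|⁻¹ := pow_one _
          _ ≤ (∑ p ∈ antidiagonal (j:ℕ), (|(qx (2*d+1) K x).coeff p.1| * ((e.choose p.2 : ℝ)))) * |t n|⁻¹ := by
              rw [← Finset.sum_mul]
              apply mul_le_mul_of_nonneg_right _ (by positivity)
              apply Finset.sum_le_sum_of_subset_of_nonneg (Finset.erase_subset _ _)
              intro p _ _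
              positivity
      calc |u n j - x j|
          = (((j:ℕ))! : ℝ) * |∑ p ∈ (antidiagonal (j:ℕ)).erase ((j:ℕ), 0), g p| := by
            rw [hun, hxq, hptc, hsplit, hg0]
            rw [show (((j:ℕ))! : ℝ) * (∑ p ∈ (antidiagonal (j:ℕ)).erase ((j:ℕ),0), g p
                  + (qx (2*d+1) K x).coeff (j:ℕ))
                - (((j:ℕ))! : ℝ) * (qx (2*d+1) K x).coeff (j:ℕ)
              = (((j:ℕ))! : ℝ) * ∑ p ∈ (antidiagonal (j:ℕ)).erase ((j:ℕ),0), g p from by ring]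
            rw [abs_mul, Nat.abs_cast]
        _ ≤ Cj * |t n|⁻¹ := by
            rw [hCjdef, mul_assoc]
            apply mul_le_mul_of_nonneg_left hrest (by positivity)
    -- conclude the coordinatewise limit
    have hzero : Tendsto (fun n => u n j - x j) atTop (𝓝 0) := by
      apply squeeze_zero_norm' (a := fun n => Cj * |t n|⁻¹)
      · filter_upwards [ht.eventually_ge_atTop 1] with n hn
        rw [Real.norm_eq_abs]
        exact hdiff n hn
      · have := ht.inv_tendsto_atTop.const_mul Cj
        simpa using this
    have := hzero.add_const (x j)
    simpa using this
  case hbound =>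
    set CF : ℝ := ∑ r ∈ range K, ∑ a ∈ range K, |(qx (2*d+1) K x).coeff a| * ((a.choose r : ℝ)) with hCFdef
    have hCF0 : 0 ≤ CF := by
      apply Finset.sum_nonneg; intro r _
      apply Finset.sum_nonneg; intro a _
      positivity
    have hqsupp : ∀ a, K - 1 < a → (qx (2*d+1) K x).coeff a = 0 := fun a ha => qx_supp (2*d+1) K x a (by omega)
    have htb : ∀ T : ℝ, 1 ≤ |T| → ∀ r : ℕ, |(taylor T (qx (2*d+1) K x)).coeff r| ≤ CF * |T|^(K-1) := by
      intro T hT r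
      by_cases hr : r < K
      · rw [texp (K-1) (qx (2*d+1) K x) hqsupp T r]
        have hK1 : K - 1 + 1 = K := by omega
        rw [hK1]
        calc |∑ a ∈ range K, (qx (2*d+1) K x).coeff a * ((a.choose r : ℝ) * T^(a-r))|
            ≤ ∑ a ∈ range K, |(qx (2*d+1) K x).coeff a * ((a.choose r : ℝ) * T^(a-r))| :=
              Finset.abs_sum_le_sum_abs _ _
          _ ≤ ∑ a ∈ range K, (|(qx (2*d+1) K x).coeff a| * ((a.choose r : ℝ))) * |T|^(K-1) := by
              apply Finset.sum_le_sum
              intro a ha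
              simp only [Finset.mem_range] at ha
              rw [abs_mul, abs_mul, abs_pow, Nat.abs_cast]
              rw [mul_assoc]
              apply mul_le_mul_of_nonneg_left _ (abs_nonneg _)
              apply mul_le_mul_of_nonneg_left _ (by positivity)
              exact pow_le_pow_right₀ hT (by omega)
          _ = (∑ a ∈ range K, |(qx (2*d+1) K x).coeff a| * ((a.choose r : ℝ))) * |T|^(K-1) := by
              rw [← Finset.sum_mul]
          _ ≤ CF * |T|^(K-1) := by
              apply mul_le_mul_of_nonneg_right _ (by positivity)
              rw [hCFdef]
              apply Finset.single_le_sum (f := fun r => ∑ a ∈ range K, |(qx (2*d+1) K x).coeff a| * ((a.choose r : ℝ)))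
                (fun i _ => Finset.sum_nonneg (fun a _ => by positivity)) (Finset.mem_range.mpr hr)
      · have hdeg : (taylor T (qx (2*d+1) K x)).coeff r = 0 := by
          rw [texp (K-1) (qx (2*d+1) K x) hqsupp T r]
          apply Finset.sum_eq_zero
          intro a ha
          simp only [Finset.mem_range] at ha
          rw [Nat.choose_eq_zero_of_lt (show a < r by omega)]
          push_cast; ring
        rw [hdeg, abs_zero]
        positivity
    refine ⟨(((2*d))! : ℝ) * CF, by positivity, ?hgood, ?hbad⟩
    case hgood =>
      intro n hn i
      have hts : t n ≠ 0 := by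
        intro h0; rw [h0] at hn; norm_num at hn
      have hun : u n = fun j : Fin (2*d+1) => (((j:ℕ))! : ℝ) * (pt (2*d+1) K e x (t n)).coeff (j:ℕ) := by
        rw [hudef]; simp only [if_pos hn]
      rw [hun, flow_of_poly (2*d+1) hm (t n) _ (pt_supp (2*d+1) K e x (t n) hts hKe) i]
      rw [taylor_pt, Polynomial.coeff_C_mul, Polynomial.coeff_mul_X_pow']
      by_cases hie : e ≤ (i:ℕ)
      · rw [if_pos hie]
        rw [abs_mul, abs_mul, abs_pow, abs_neg, abs_inv, Nat.abs_cast]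
        have h1 : |(taylor (t n) (qx (2*d+1) K x)).coeff ((i:ℕ)-e)| ≤ CF * |t n|^(K-1) := htb (t n) hn _
        have h2 : (((i:ℕ))! : ℝ) ≤ (((2*d))! : ℝ) := by
          exact_mod_cast Nat.factorial_le (show (i:ℕ) ≤ 2*d by have := i.isLt; omega)
        have h3 : (|t n|⁻¹)^e = 1 / |t n|^e := by
          rw [inv_pow]; rw [inv_eq_one_div]
        calc (((i:ℕ))! : ℝ) * ((|t n|⁻¹)^e * |(taylor (t n) (qx (2*d+1) K x)).coeff ((i:ℕ)-e)|)
            ≤ (((i:ℕ))! : ℝ) * ((|t n|⁻¹)^e * (CF * |t n|^(K-1))) := by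
              apply mul_le_mul_of_nonneg_left _ (by positivity)
              apply mul_le_mul_of_nonneg_left h1 (by positivity)
          _ = ((((i:ℕ))! : ℝ) * CF) * (|t n|^(K-1) / |t n|^e) := by
              rw [h3]; ring
          _ ≤ ((((2*d))! : ℝ) * CF) * (|t n|^(K-1) / |t n|^e) := by
              apply mul_le_mul_of_nonneg_right _ (by positivity)
              apply mul_le_mul_of_nonneg_right h2 hCF0
      · rw [if_neg hie]
        rw [mul_zero, mul_zero, abs_zero]
        positivity
    case hbad =>
      intro n hn
      have hun : u n = 0 := by
        rw [hudef]; simp only [if_neg hn]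
      rw [hun, jordanFlow_zero]



lemma sub_C0star (d : ℕ) (hd : 0 < d) :
    {x : Fin (2*d+1) → ℝ | ∀ i : Fin (2*d+1), d ≤ (i:ℕ) → x i = 0}
      ⊆ jordanCoreC0star (2*d+1) := by
  intro x hx t ht
  obtain ⟨u, hu, CB, hCB0, hgood, hbad⟩ :=
    constr d d (d+1) (by omega) (by omega) (by omega) x (fun i hi => hx i hi) t ht
  refine ⟨u, hu, ?_⟩
  apply squeeze_zero_norm' (a := fun n => CB * |t n|⁻¹)
  · filter_upwards [ht.eventually_ge_atTop 1] with n hn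
    have hratio : |t n|^(d-1)/|t n|^(d+1) ≤ |t n|⁻¹ := ratio_le_inv _ hn _ _ (by omega)
    apply (pi_norm_le_iff_of_nonneg (by positivity)).mpr
    intro i
    rw [Real.norm_eq_abs]
    calc |jordanFlow (2*d+1) (t n) (u n) i| ≤ CB * (|t n|^(d-1)/|t n|^(d+1)) := hgood n hn i
      _ ≤ CB * |t n|⁻¹ := mul_le_mul_of_nonneg_left hratio hCB0
  · simpa using ht.inv_tendsto_atTop.const_mul CB

lemma sub_Cstar (d : ℕ) (hd : 0 < d) :
    {x : Fin (2*d+1) → ℝ | ∀ i : Fin (2*d+1), d + 1 ≤ (i:ℕ) → x i = 0}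
      ⊆ jordanCoreCstar (2*d+1) := by
  intro x hx t ht
  obtain ⟨u, hu, CB, hCB0, hgood, hbad⟩ :=
    constr d (d+1) d (by omega) (by omega) (by omega) x (fun i hi => hx i hi) t ht
  refine ⟨u, hu, CB, ?_⟩
  intro n
  by_cases hn : 1 ≤ |t n|
  · apply (pi_norm_le_iff_of_nonneg hCB0).mpr
    intro i
    rw [Real.norm_eq_abs]
    have hratio : |t n|^(d+1-1)/|t n|^d ≤ 1 := ratio_le_one _ hn _ _ (by omega)
    calc |jordanFlow (2*d+1) (t n) (u n) i| ≤ CB * (|t n|^(d+1-1)/|t n|^d) := hgood n hn i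
      _ ≤ CB * 1 := mul_le_mul_of_nonneg_left hratio hCB0
      _ = CB := mul_one _
  · rw [hbad n hn, norm_zero]
    exact hCB0

lemma seq_pos_tendsto : Tendsto (fun n : ℕ => |((n:ℝ)+1)|) atTop atTop := by
  have h1 : Tendsto (fun n : ℕ => (n:ℝ)+1) atTop atTop :=
    tendsto_atTop_add_const_right atTop 1 tendsto_natCast_atTop_atTop
  apply h1.congr
  intro n
  rw [abs_of_nonneg (by positivity)]

lemma seq_neg_tendsto : Tendsto (fun n : ℕ => |(-((n:ℝ)+1))|) atTop atTop := by
  have h : ∀ n : ℕ, |((n:ℝ)+1)| = |(-((n:ℝ)+1))| := fun n => (abs_neg _).symm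
  exact seq_pos_tendsto.congr h

lemma C0star_sub_C0 (d : ℕ) : jordanCoreC0star (2*d+1) ⊆ jordanCoreC0 (2*d+1) := by
  intro x hx
  obtain ⟨up, hup, hupflow⟩ := hx (fun n : ℕ => (n:ℝ)+1) seq_pos_tendsto
  obtain ⟨um, hum, humflow⟩ := hx (fun n : ℕ => -((n:ℝ)+1)) seq_neg_tendsto
  refine ⟨fun n : ℕ => (n:ℝ)+1, fun n : ℕ => -((n:ℝ)+1), up, um,
    tendsto_atTop_add_const_right atTop 1 tendsto_natCast_atTop_atTop, ?_, hup, hum, hupflow, humflow⟩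
  have h1 : Tendsto (fun n : ℕ => (n:ℝ)+1) atTop atTop :=
    tendsto_atTop_add_const_right atTop 1 tendsto_natCast_atTop_atTop
  exact tendsto_neg_atBot_iff.mpr h1

lemma Cstar_sub_C (d : ℕ) : jordanCoreCstar (2*d+1) ⊆ jordanCoreC (2*d+1) := by
  intro x hx
  obtain ⟨up, hup, Mp, hupflow⟩ := hx (fun n : ℕ => (n:ℝ)+1) seq_pos_tendsto
  obtain ⟨um, hum, Mm, humflow⟩ := hx (fun n : ℕ => -((n:ℝ)+1)) seq_neg_tendsto
  refine ⟨fun n : ℕ => (n:ℝ)+1, fun n : ℕ => -((n:ℝ)+1), up, um,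
    tendsto_atTop_add_const_right atTop 1 tendsto_natCast_atTop_atTop, ?_, hup, hum,
    ⟨Mp, hupflow⟩, ⟨Mm, humflow⟩⟩
  have h1 : Tendsto (fun n : ℕ => (n:ℝ)+1) atTop atTop :=
    tendsto_atTop_add_const_right atTop 1 tendsto_natCast_atTop_atTop
  exact tendsto_neg_atBot_iff.mpr h1


end Stmt13aux

/-- For the linear flow generated by the nilpotent Jordan block
`J_{2d+1}` on `ℝ^{2d+1}` (`d ∈ ℕ`, `d ≥ 1`), the uniform `(0,0)`-core and the
`(0,0)`-core equal `span{e_1,…,e_d}`, while the uniform core and the core equal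
`span{e_1,…,e_{d+1}}`. -/
theorem stmt13 (d : ℕ) (hd : 0 < d) :
    jordanCoreC0star (2 * d + 1)
      = {x : Fin (2 * d + 1) → ℝ | ∀ i : Fin (2 * d + 1), d ≤ (i : ℕ) → x i = 0} ∧
    jordanCoreC0 (2 * d + 1)
      = {x : Fin (2 * d + 1) → ℝ | ∀ i : Fin (2 * d + 1), d ≤ (i : ℕ) → x i = 0} ∧
    jordanCoreCstar (2 * d + 1)
      = {x : Fin (2 * d + 1) → ℝ | ∀ i : Fin (2 * d + 1), d + 1 ≤ (i : ℕ) → x i = 0} ∧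
    jordanCoreC (2 * d + 1)
      = {x : Fin (2 * d + 1) → ℝ | ∀ i : Fin (2 * d + 1), d + 1 ≤ (i : ℕ) → x i = 0} := by
  refine ⟨?_, ?_, ?_, ?_⟩
  · exact Set.Subset.antisymm ((Stmt13aux.C0star_sub_C0 d).trans (Stmt13aux.coreC0_sub d))
      (Stmt13aux.sub_C0star d hd)
  · exact Set.Subset.antisymm (Stmt13aux.coreC0_sub d)
      ((Stmt13aux.sub_C0star d hd).trans (Stmt13aux.C0star_sub_C0 d))
  · exact Set.Subset.antisymm ((Stmt13aux.Cstar_sub_C d).trans (Stmt13aux.coreC_sub d))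
      (Stmt13aux.sub_Cstar d hd)
  · exact Set.Subset.antisymm (Stmt13aux.coreC_sub d)
      ((Stmt13aux.sub_Cstar d hd).trans (Stmt13aux.Cstar_sub_C d))
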